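/- If P and Q are quandles presented by ⟨X | R⟩ and ⟨Y | S⟩, then the enveloping group of their free product Q * P = ⟨X ∪ Y | R ∪ S⟩ is the free product of groups G_Q * G_P; moreover, if the natural maps Q → G_Q and P → G_P are injective, then the natural map Q * P → G_{Q*P} is injective. -/

import Mathlib

namespace FreeProdConj
open Monoid Monoid.CoprodI

variable {ι : Type*} [DecidableEq ι] {G : ι → Type*} [∀ i, Group (G i)]

theorem prod_injective :
    Function.Injective (Word.prod : Word G → CoprodI G) := by
  letI : ∀ i, DecidableEq (G i) := fun _ => Classical.decEq _
  have : (Word.prod : Word G → CoprodI G) = ⇑(Word.equiv (M := G)).symm := rfl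
  rw [this]
  exact (Word.equiv (M := G)).symm.injective

/-- singleton word -/
def sing {i : ι} (a : G i) (ha : a ≠ 1) : Word G :=
  ⟨[⟨i, a⟩], by simpa using ha, List.isChain_singleton _⟩

theorem sing_prod {i : ι} (a : G i) (ha : a ≠ 1) : (sing a ha).prod = of a := by
  simp [sing, Word.prod]

theorem of_ne_one {i : ι} {a : G i} (ha : a ≠ 1) : (of a : CoprodI G) ≠ 1 := by
  intro h
  have h2 : (sing a ha).prod = Word.empty.prod := by
    rw [sing_prod, Word.prod_empty, h]
  have := prod_injective h2
  simpa [sing, Word.empty] using congrArg Word.toList this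

theorem of_eq_of {i j : ι} {a : G i} {b : G j} (ha : a ≠ 1) (hb : b ≠ 1)
    (h : (of a : CoprodI G) = of b) : i = j := by
  have h2 : (sing a ha).prod = (sing b hb).prod := by rw [sing_prod, sing_prod, h]
  have := congrArg Word.toList (prod_injective h2)
  simp only [sing, List.cons.injEq] at this
  exact congrArg Sigma.fst this.1

theorem toList_inv_length {i j} (w : NeWord G i j) :
    (NeWord.inv w).toList.length = w.toList.length := by
  induction w with
  | singleton x h => rfl
  | append w1 hne w2 ih1 ih2 =>
    simp [NeWord.inv, NeWord.toList, ih1, ih2]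
    omega

theorem conj_word : ∀ (n : ℕ) (w : Word G), w.toList.length = n →
    ∀ {i j : ι} {a : G i} {b : G j}, a ≠ 1 →
    w.prod * of a * w.prod⁻¹ = of b → i = j ∧ ∃ c : G i, w.prod = of c := by
  intro n
  induction n using Nat.strong_induction_on with
  | _ n IH =>
    intro w hlen i j a b ha hconj
    rcases List.eq_nil_or_concat w.toList with hnil | ⟨L', x, hL0⟩
    · -- empty word
      have hw : w.prod = 1 := by
        have : w.toList.map (fun l => (of l.snd : CoprodI G)) = [] := by rw [hnil]; rfl
        simp [Word.prod, this]
      rw [hw] at hconj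
      simp only [one_mul, inv_one, mul_one] at hconj
      have hb : b ≠ 1 := by
        intro h1
        rw [h1, map_one] at hconj
        exact of_ne_one ha hconj
      refine ⟨of_eq_of ha hb hconj, 1, by rw [hw, map_one]⟩
    · -- w = L' ++ [x]
      have hL : w.toList = L' ++ [x] := by rw [hL0, List.concat_eq_append]
      have hchain := w.chain_ne
      have hne_one := w.ne_one
      rw [hL] at hchain hne_one
      -- the prefix word
      set w' : Word G := ⟨L', fun l hl => hne_one l (List.mem_append_left _ hl),
        (List.isChain_append.mp hchain).1⟩ with hw'
      have hprod : w.prod = w'.prod * of x.snd := by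
        show w.prod = (L'.map fun l => (of l.snd : CoprodI G)).prod * of x.snd
        rw [Word.prod, hL]
        simp
      by_cases hx : x.fst = i
      · -- last letter in same factor as a
        obtain ⟨l, c⟩ := x
        dsimp at hx
        subst hx
        have hc : c ≠ 1 := hne_one ⟨l, c⟩ (by simp)
        have hconj2 : w'.prod * of (c * a * c⁻¹) * w'.prod⁻¹ = of b := by
          rw [← hconj, hprod]
          simp [map_mul, mul_assoc]
        have hca : c * a * c⁻¹ ≠ 1 := by
          intro h1
          apply ha
          have : a = c⁻¹ * (c * a * c⁻¹) * c := by group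
          rw [h1] at this
          simpa using this
        have hlen' : L'.length < n := by
          rw [← hlen, hL]
          simp
        obtain ⟨hij, d, hd⟩ := IH L'.length hlen' w' rfl hca hconj2
        -- now show L' must be empty
        rcases eq_or_ne d 1 with hd1 | hd1
        · rw [hd1, map_one] at hd
          have : w' = Word.empty := prod_injective (by rw [hd, Word.prod_empty])
          have hL' : L' = [] := congrArg Word.toList this
          refine ⟨hij, c, ?_⟩
          rw [hprod, hd, one_mul]
        · have : w' = sing d hd1 := prod_injective (by rw [hd, sing_prod])
          have hL' : L' = [⟨l, d⟩] := congrArg Word.toList this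
          exfalso
          rw [hL'] at hchain
          have := (List.isChain_append.mp hchain).2.2
          have h3 := this ⟨l, d⟩ (by simp) ⟨l, c⟩ (by simp)
          exact h3 rfl
      · -- last letter in different factor: contradiction via palindrome
        exfalso
        have hwne : w ≠ Word.empty := by
          intro h1
          rw [h1] at hL
          simp at hL
        obtain ⟨s, t, v, hv⟩ := NeWord.of_word w hwne
        have hvl : v.toList = w.toList := congrArg Word.toList hv
        -- last index of v is x.fst
        have hlast : (⟨t, v.last⟩ : Σ i, G i) = x := by
          have h1 := NeWord.toList_getLast? v
          rw [hvl, hL, List.getLast?_concat] at h1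
          exact Option.some_injective _ h1.symm
        have hti : t ≠ i := by
          rw [← congrArg Sigma.fst hlast] at hx
          exact hx
        have hit : i ≠ t := fun h => hti h.symm
        set P : NeWord G s s :=
          (v.append hti (NeWord.singleton a ha)).append hit v.inv with hP
        have hPprod : P.prod = of b := by
          rw [hP]
          rw [NeWord.append_prod, NeWord.append_prod, NeWord.prod_singleton, NeWord.inv_prod]
          have hvw : v.prod = w.prod := by rw [NeWord.prod, hv]
          rw [hvw]
          exact hconj
        have hPlen : P.toWord.toList.length = 2 * w.toList.length + 1 := by
          show P.toList.length = 2 * w.toList.length + 1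
          rw [hP]
          simp [NeWord.toList, toList_inv_length, hvl]
          omega
        have hwlen : 1 ≤ w.toList.length := by
          rw [hL]
          simp
        have hb : b ≠ 1 := by
          intro h1
          rw [h1, map_one] at hPprod
          have hPe : P.toWord = Word.empty :=
            prod_injective (by rw [Word.prod_empty]; exact hPprod)
          rw [hPe] at hPlen
          simp at hPlen
        have : P.toWord = sing b hb :=
          prod_injective (by rw [sing_prod]; exact hPprod)
        rw [this] at hPlen
        have hsl : (sing b hb).toList.length = 1 := rfl
        omega

theorem conj_of {i j : ι} {a : G i} {b : G j} (ha : a ≠ 1) (k : CoprodI G)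
    (h : k * of a * k⁻¹ = of b) : i = j ∧ ∃ c : G i, k = of c := by
  letI : ∀ i, DecidableEq (G i) := fun _ => Classical.decEq _
  have hk : (Word.equiv (M := G) k).prod = k := (Word.equiv (M := G)).symm_apply_apply k
  have := conj_word (Word.equiv (M := G) k).toList.length (Word.equiv (M := G) k) rfl ha
    (by rw [hk]; exact h)
  rw [hk] at this
  exact this

end FreeProdConj


open Quandles

namespace FreeProdConj

universe u v

variable (A B : Type u) [Group A] [Group B]

def FB : Bool → Type u := fun b => Bool.rec B A b

instance FBGroup : (b : Bool) → Group (FB A B b) := fun b =>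
  Bool.rec (motive := fun b => Group (FB A B b))
    (inferInstance : Group B) (inferInstance : Group A) b

def fwd : Monoid.Coprod A B →* Monoid.CoprodI (FB A B) :=
  Monoid.Coprod.lift (Monoid.CoprodI.of (M := FB A B) (i := true))
    (Monoid.CoprodI.of (M := FB A B) (i := false))

def bwd : Monoid.CoprodI (FB A B) →* Monoid.Coprod A B :=
  Monoid.CoprodI.lift (fun b => Bool.rec
    (motive := fun b => FB A B b →* Monoid.Coprod A B)
    Monoid.Coprod.inr Monoid.Coprod.inl b)

theorem bwd_fwd : (bwd A B).comp (fwd A B) = MonoidHom.id _ := by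
  apply Monoid.Coprod.hom_ext
  · ext x
    show bwd A B (fwd A B (Monoid.Coprod.inl x)) = Monoid.Coprod.inl x
    rw [show fwd A B (Monoid.Coprod.inl x) = Monoid.CoprodI.of (M := FB A B) (i := true) x
      from Monoid.Coprod.lift_apply_inl _ _ x]
    exact Monoid.CoprodI.lift_of (M := FB A B) _ (i := true) x
  · ext x
    show bwd A B (fwd A B (Monoid.Coprod.inr x)) = Monoid.Coprod.inr x
    rw [show fwd A B (Monoid.Coprod.inr x) = Monoid.CoprodI.of (M := FB A B) (i := false) x
      from Monoid.Coprod.lift_apply_inr _ _ x]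
    exact Monoid.CoprodI.lift_of (M := FB A B) _ (i := false) x

theorem fwd_bwd : (fwd A B).comp (bwd A B) = MonoidHom.id _ := by
  apply Monoid.CoprodI.ext_hom
  intro i
  cases i
  · ext x
    show fwd A B (bwd A B (Monoid.CoprodI.of (M := FB A B) (i := false) x))
      = Monoid.CoprodI.of (M := FB A B) (i := false) x
    rw [show bwd A B (Monoid.CoprodI.of (M := FB A B) (i := false) x)
        = Monoid.Coprod.inr x from Monoid.CoprodI.lift_of (M := FB A B) _ (i := false) x]
    exact Monoid.Coprod.lift_apply_inr _ _ x
  · ext x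
    show fwd A B (bwd A B (Monoid.CoprodI.of (M := FB A B) (i := true) x))
      = Monoid.CoprodI.of (M := FB A B) (i := true) x
    rw [show bwd A B (Monoid.CoprodI.of (M := FB A B) (i := true) x)
        = Monoid.Coprod.inl x from Monoid.CoprodI.lift_of (M := FB A B) _ (i := true) x]
    exact Monoid.Coprod.lift_apply_inl _ _ x

def eAB : Monoid.Coprod A B ≃* Monoid.CoprodI (FB A B) :=
  MonoidHom.toMulEquiv (fwd A B) (bwd A B) (bwd_fwd A B) (fwd_bwd A B)

variable {A B}

theorem eAB_inl (a : A) :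
    eAB A B (Monoid.Coprod.inl a) = Monoid.CoprodI.of (M := FB A B) (i := true) a := by
  show fwd A B (Monoid.Coprod.inl a) = _
  exact Monoid.Coprod.lift_apply_inl _ _ a

theorem eAB_inr (b : B) :
    eAB A B (Monoid.Coprod.inr b) = Monoid.CoprodI.of (M := FB A B) (i := false) b := by
  show fwd A B (Monoid.Coprod.inr b) = _
  exact Monoid.Coprod.lift_apply_inr _ _ b

theorem coprod_conj_inl {a b : A} (ha : a ≠ 1) (k : Monoid.Coprod A B)
    (h : k * Monoid.Coprod.inl a * k⁻¹ = Monoid.Coprod.inl b) :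
    ∃ c : A, k = Monoid.Coprod.inl c := by
  have h2 : eAB A B k * Monoid.CoprodI.of (M := FB A B) (i := true) a * (eAB A B k)⁻¹
      = Monoid.CoprodI.of (M := FB A B) (i := true) b := by
    rw [← eAB_inl, ← eAB_inl, ← map_inv, ← map_mul, ← map_mul, h]
  obtain ⟨-, c, hc⟩ := conj_of (G := FB A B) (i := true) (j := true) ha (eAB A B k) h2
  refine ⟨c, (eAB A B).injective ?_⟩
  rw [hc]
  exact (eAB_inl (A := A) (B := B) c).symm

theorem coprod_conj_inl_ne_inr {a : A} {b : B} (ha : a ≠ 1) (hb : b ≠ 1)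
    (k : Monoid.Coprod A B) :
    k * Monoid.Coprod.inl a * k⁻¹ ≠ Monoid.Coprod.inr b := by
  intro h
  have h2 : eAB A B k * Monoid.CoprodI.of (M := FB A B) (i := true) a * (eAB A B k)⁻¹
      = Monoid.CoprodI.of (M := FB A B) (i := false) b := by
    rw [← eAB_inl, ← eAB_inr, ← map_inv, ← map_mul, ← map_mul, h]
  obtain ⟨htf, -⟩ := conj_of (G := FB A B) (i := true) (j := false) ha (eAB A B k) h2
  exact Bool.noConfusion htf

theorem coprod_conj_inr {a b : B} (ha : a ≠ 1) (k : Monoid.Coprod A B)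
    (h : k * Monoid.Coprod.inr a * k⁻¹ = Monoid.Coprod.inr b) :
    ∃ c : B, k = Monoid.Coprod.inr c := by
  have h2 : eAB A B k * Monoid.CoprodI.of (M := FB A B) (i := false) a * (eAB A B k)⁻¹
      = Monoid.CoprodI.of (M := FB A B) (i := false) b := by
    rw [← eAB_inr, ← eAB_inr, ← map_inv, ← map_mul, ← map_mul, h]
  obtain ⟨-, c, hc⟩ := conj_of (G := FB A B) (i := false) (j := false) ha (eAB A B k) h2
  refine ⟨c, (eAB A B).injective ?_⟩
  rw [hc]
  exact (eAB_inr (A := A) (B := B) c).symm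

end FreeProdConj

namespace EnvelAux

open Rack

universe u v

variable {Q : Type u} [Rack Q]

theorem hom_ext {G : Type v} [Group G] {F F' : EnvelGroup Q →* G}
    (h : ∀ x : Q, F (toEnvelGroup Q x) = F' (toEnvelGroup Q x)) : F = F' := by
  have h2 : toEnvelGroup.map.symm F = toEnvelGroup.map.symm F' := by
    have e1 : toEnvelGroup.map.symm F = (Quandle.Conj.map F).comp (toEnvelGroup Q) := rfl
    have e2 : toEnvelGroup.map.symm F' = (Quandle.Conj.map F').comp (toEnvelGroup Q) := rfl
    rw [e1, e2]
    exact DFunLike.coe_injective (funext h)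
  exact toEnvelGroup.map.symm.injective h2

theorem univ_apply {G : Type v} [Group G] (f : Q →◃ Quandle.Conj G) (x : Q) :
    toEnvelGroup.map f (toEnvelGroup Q x) = f x :=
  DFunLike.congr_fun (toEnvelGroup.univ Q G f) x

theorem closure_range :
    Subgroup.closure (Set.range fun x : Q => toEnvelGroup Q x) = ⊤ := by
  set H := Subgroup.closure (Set.range fun x : Q => toEnvelGroup Q x) with hH
  have hmem : ∀ x : Q, toEnvelGroup Q x ∈ H :=
    fun x => Subgroup.subset_closure ⟨x, rfl⟩
  set j : Q →◃ Quandle.Conj H :=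
    { toFun := fun q => ⟨toEnvelGroup Q q, hmem q⟩
      map_act' := by
        intro x y
        apply Subtype.ext
        show toEnvelGroup Q (x ◃ y) = _
        rw [(toEnvelGroup Q).map_act]
        rfl } with hj
  have hcomp : H.subtype.comp (toEnvelGroup.map j) = MonoidHom.id _ := by
    apply hom_ext
    intro x
    rw [MonoidHom.comp_apply, univ_apply]
    rfl
  rw [eq_top_iff]
  intro g _
  have h3 : H.subtype ((toEnvelGroup.map j) g) = g := DFunLike.congr_fun hcomp g
  rw [← h3]
  exact SetLike.coe_mem _

theorem actA_mul (g h : EnvelGroup Q) (z : Q) :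
    envelAction (g * h) z = envelAction g (envelAction h z) := by
  rw [map_mul]; rfl

theorem actA_one (z : Q) : envelAction (1 : EnvelGroup Q) z = z := by
  rw [map_one]; rfl

theorem actA_inv_cancel (g : EnvelGroup Q) (z : Q) :
    envelAction g (envelAction g⁻¹ z) = z := by
  rw [← actA_mul, mul_inv_cancel, actA_one]

theorem actA_inv_cancel' (g : EnvelGroup Q) (z : Q) :
    envelAction g⁻¹ (envelAction g z) = z := by
  rw [← actA_mul, inv_mul_cancel, actA_one]

theorem toE_act (h : EnvelGroup Q) (q : Q) :
    toEnvelGroup Q (envelAction h q) = h * toEnvelGroup Q q * h⁻¹ := by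
  set S : Subgroup (EnvelGroup Q) :=
    { carrier := {h | ∀ q : Q, toEnvelGroup Q (envelAction h q) = h * toEnvelGroup Q q * h⁻¹}
      one_mem' := by
        intro q
        rw [actA_one]
        group
      mul_mem' := by
        intro a b ha hb q
        rw [actA_mul, ha, hb]
        group
      inv_mem' := by
        intro a ha q
        have h1 := ha (envelAction a⁻¹ q)
        rw [actA_inv_cancel] at h1
        rw [h1]
        group } with hS
  have hle : Subgroup.closure (Set.range fun x : Q => toEnvelGroup Q x) ≤ S := by
    rw [Subgroup.closure_le]
    rintro _ ⟨x, rfl⟩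
    intro q
    rw [envelAction_prop, (toEnvelGroup Q).map_act]
    rfl
  rw [closure_range] at hle
  exact hle (Subgroup.mem_top h) q

theorem toE_ne_one (q : Q) : toEnvelGroup Q q ≠ 1 := by
  intro h1
  have h2 := univ_apply (Q := Q) (G := Multiplicative ℤ)
    { toFun := fun _ => Multiplicative.ofAdd (1 : ℤ)
      map_act' := by
        intro x y
        show Multiplicative.ofAdd (1 : ℤ) = Multiplicative.ofAdd (1 : ℤ) *
          Multiplicative.ofAdd (1 : ℤ) * (Multiplicative.ofAdd (1 : ℤ))⁻¹
        rw [mul_inv_cancel_right] } q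
  rw [h1, map_one] at h2
  have h3 : (1 : Multiplicative ℤ) ≠ Multiplicative.ofAdd (1 : ℤ) := by decide
  exact h3 h2

theorem actA_inv_toE (z z' : Q) :
    envelAction ((toEnvelGroup Q z)⁻¹) z' = z ◃⁻¹ z' := by
  apply (envelAction (toEnvelGroup Q z)).injective
  rw [actA_inv_cancel, envelAction_prop]
  exact (Rack.right_inv z z').symm

theorem toE_invAct (x y : Q) :
    toEnvelGroup Q (x ◃⁻¹ y)
      = (toEnvelGroup Q x)⁻¹ * toEnvelGroup Q y * toEnvelGroup Q x := by
  have h1 := (toEnvelGroup Q).map_act (x := x) (y := x ◃⁻¹ y)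
  rw [Quandle.conj_act_eq_conj] at h1
  rw [Rack.right_inv x y] at h1
  rw [h1]
  group

end EnvelAux


/-- Quandle words on a set `X` of generators: generators, `a * b`, and `a *⁻¹ b`. -/
inductive QW (X : Type u) : Type u
  | of (x : X) : QW X
  | op (a b : QW X) : QW X
  | opInv (a b : QW X) : QW X

namespace QW

/-- Renaming of generators in quandle words. -/
def map {X : Type u} {Z : Type v} (f : X → Z) : QW X → QW Z
  | of x => of (f x)
  | op a b => op (map f a) (map f b)
  | opInv a b => opInv (map f a) (map f b)

/-- The equivalence relation on quandle words generated by the quandle axioms and a set `R`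
of defining relations. -/
inductive Rel {X : Type u} (R : QW X → QW X → Prop) : QW X → QW X → Prop
  | rel {a b} : R a b → Rel R a b
  | refl (a) : Rel R a a
  | symm {a b} : Rel R a b → Rel R b a
  | trans {a b c} : Rel R a b → Rel R b c → Rel R a c
  | congr_op {a b c d} : Rel R a b → Rel R c d → Rel R (op a c) (op b d)
  | congr_opInv {a b c d} : Rel R a b → Rel R c d → Rel R (opInv a c) (opInv b d)
  | idem (a) : Rel R (op a a) a
  | idemInv (a) : Rel R (opInv a a) a
  | cancel (a b) : Rel R (opInv (op a b) b) a
  | cancel' (a b) : Rel R (op (opInv a b) b) a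
  | distrib (a b c) : Rel R (op (op a b) c) (op (op a c) (op b c))

def setoid {X : Type u} (R : QW X → QW X → Prop) : Setoid (QW X) :=
  ⟨Rel R, ⟨Rel.refl, Rel.symm, Rel.trans⟩⟩

end QW

/-- The quandle presented by generators `X` and relations `R`. -/
def PresentedQuandle {X : Type u} (R : QW X → QW X → Prop) : Type u :=
  Quotient (QW.setoid R)

namespace PresentedQuandle

variable {X : Type u} {R : QW X → QW X → Prop}

theorem opInv_distrib (z y x : QW X) :
    QW.Rel R (QW.opInv (QW.opInv z y) x)
      (QW.opInv (QW.opInv z x) (QW.opInv y x)) := by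
  set u := QW.opInv (QW.opInv z x) (QW.opInv y x) with hu
  have h1 : QW.Rel R (QW.op (QW.op u (QW.opInv y x)) x)
      (QW.op (QW.op u x) (QW.op (QW.opInv y x) x)) := QW.Rel.distrib _ _ _
  have h2 : QW.Rel R (QW.op (QW.op u (QW.opInv y x)) x) (QW.op (QW.opInv z x) x) :=
    QW.Rel.congr_op (QW.Rel.cancel' _ _) (QW.Rel.refl _)
  have h3 : QW.Rel R (QW.op (QW.opInv z x) x) z := QW.Rel.cancel' _ _
  have h4 : QW.Rel R (QW.op (QW.op u x) (QW.op (QW.opInv y x) x)) (QW.op (QW.op u x) y) :=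
    QW.Rel.congr_op (QW.Rel.refl _) (QW.Rel.cancel' _ _)
  have h5 : QW.Rel R z (QW.op (QW.op u x) y) :=
    ((h2.symm.trans h1).trans h4).symm.symm.trans (QW.Rel.refl _) |>.symm.symm |>.trans
      (QW.Rel.refl _) |>.symm.trans h3 |>.symm
  have h6 : QW.Rel R (QW.opInv z y) (QW.op u x) :=
    (QW.Rel.congr_opInv h5 (QW.Rel.refl y)).trans (QW.Rel.cancel _ _)
  exact (QW.Rel.congr_opInv h6 (QW.Rel.refl x)).trans (QW.Rel.cancel _ _)

instance quandle : Quandle (PresentedQuandle R) where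
  act := Quotient.map₂ (fun x y => QW.opInv y x)
    (fun _ _ h _ _ h' => QW.Rel.congr_opInv h' h)
  invAct := Quotient.map₂ (fun x y => QW.op y x)
    (fun _ _ h _ _ h' => QW.Rel.congr_op h' h)
  self_distrib := by
    rintro ⟨x⟩ ⟨y⟩ ⟨z⟩
    exact Quotient.sound (opInv_distrib z y x)
  left_inv := by
    rintro ⟨x⟩ ⟨y⟩
    exact Quotient.sound (QW.Rel.cancel' y x)
  right_inv := by
    rintro ⟨x⟩ ⟨y⟩
    exact Quotient.sound (QW.Rel.cancel y x)
  fix := by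
    rintro ⟨x⟩
    exact Quotient.sound (QW.Rel.idemInv x)

end PresentedQuandle

/-- The relations of the free product `⟨X ∪ Y | R ∪ S⟩` of `⟨X | R⟩` and `⟨Y | S⟩`. -/
def sumRel {X Y : Type u} (R : QW X → QW X → Prop) (S : QW Y → QW Y → Prop) :
    QW (X ⊕ Y) → QW (X ⊕ Y) → Prop := fun a b =>
  (∃ a' b', R a' b' ∧ a = QW.map Sum.inl a' ∧ b = QW.map Sum.inl b') ∨
  (∃ a' b', S a' b' ∧ a = QW.map Sum.inr a' ∧ b = QW.map Sum.inr b')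


namespace QW

universe w1 w2 w3

def ev {Z : Type w1} {G : Type w2} [Group G] (gen : Z → G) : QW Z → G
  | .of z => gen z
  | .op a b => (ev gen b)⁻¹ * ev gen a * ev gen b
  | .opInv a b => ev gen b * ev gen a * (ev gen b)⁻¹

theorem ev_rel {Z : Type w1} {G : Type w2} [Group G] (gen : Z → G)
    {R : QW Z → QW Z → Prop} (hR : ∀ a b, R a b → ev gen a = ev gen b)
    {a b : QW Z} (h : Rel R a b) : ev gen a = ev gen b := by
  induction h with
  | rel h => exact hR _ _ h
  | refl a => rfl
  | symm _ ih => exact ih.symm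
  | trans _ _ ih1 ih2 => exact ih1.trans ih2
  | congr_op _ _ ih1 ih2 => simp only [ev, ih1, ih2]
  | congr_opInv _ _ ih1 ih2 => simp only [ev, ih1, ih2]
  | idem a => simp only [ev]; group
  | idemInv a => simp only [ev]; group
  | cancel a b => simp only [ev]; group
  | cancel' a b => simp only [ev]; group
  | distrib a b c => simp only [ev]; group

theorem ev_map {Z : Type w1} {W : Type w2} {G : Type w3} [Group G]
    (gen : W → G) (f : Z → W) (w : QW Z) :
    ev gen (map f w) = ev (fun z => gen (f z)) w := by
  induction w with
  | of x => rfl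
  | op a b iha ihb => simp only [map, ev, iha, ihb]
  | opInv a b iha ihb => simp only [map, ev, iha, ihb]

theorem ev_hom {Z : Type w1} {G : Type w2} {H : Type w3} [Group G] [Group H]
    (φ : G →* H) (gen : Z → G) (w : QW Z) :
    φ (ev gen w) = ev (fun z => φ (gen z)) w := by
  induction w with
  | of x => rfl
  | op a b iha ihb => simp only [ev, map_mul, map_inv, iha, ihb]
  | opInv a b iha ihb => simp only [ev, map_mul, map_inv, iha, ihb]

end QW

namespace PresentedQuandle

universe u' v'

variable {X : Type u'} {R : QW X → QW X → Prop}

/-- The class of a word in the presented quandle. -/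
def mk (R : QW X → QW X → Prop) (w : QW X) : PresentedQuandle R := Quotient.mk _ w

theorem act_mk (x y : QW X) : mk R x ◃ mk R y = mk R (QW.opInv y x) := rfl

theorem invAct_mk (x y : QW X) : mk R x ◃⁻¹ mk R y = mk R (QW.op y x) := rfl

theorem sound {a b : QW X} (h : QW.Rel R a b) : mk R a = mk R b :=
  Quotient.sound h

theorem ind {motive : PresentedQuandle R → Prop} (h : ∀ w, motive (mk R w)) :
    ∀ q, motive q := Quotient.ind h

theorem toE_mk (w : QW X) :
    Rack.toEnvelGroup (PresentedQuandle R) (mk R w)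
      = QW.ev (fun x => Rack.toEnvelGroup (PresentedQuandle R) (mk R (QW.of x))) w := by
  induction w with
  | of x => rfl
  | op a b iha ihb =>
    have h1 : mk R (QW.op a b) = mk R b ◃⁻¹ mk R a := rfl
    rw [h1, EnvelAux.toE_invAct, iha, ihb]
    rfl
  | opInv a b iha ihb =>
    have h1 : mk R (QW.opInv a b) = mk R b ◃ mk R a := rfl
    have h2 := (Rack.toEnvelGroup (PresentedQuandle R)).map_act
      (x := mk R b) (y := mk R a)
    rw [Quandle.conj_act_eq_conj] at h2
    rw [h1, h2, iha, ihb]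
    rfl

/-- The quandle homomorphism to a conjugation quandle defined by evaluation of words. -/
def evSh {G : Type v'} [Group G] (gen : X → G)
    (hR : ∀ a b, R a b → QW.ev gen a = QW.ev gen b) :
    PresentedQuandle R →◃ Quandle.Conj G where
  toFun := Quotient.lift (QW.ev gen) (fun _ _ h => QW.ev_rel gen hR h)
  map_act' := by
    rintro ⟨x⟩ ⟨y⟩
    show QW.ev gen (QW.opInv y x) = _
    rw [Quandle.conj_act_eq_conj]
    rfl

theorem evSh_mk {G : Type v'} [Group G] (gen : X → G)
    (hR : ∀ a b, R a b → QW.ev gen a = QW.ev gen b) (w : QW X) :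
    evSh gen hR (mk R w) = QW.ev gen w := rfl

end PresentedQuandle

namespace FreeProdMain

open PresentedQuandle Rack

universe u

variable {X Y : Type u} (R : QW X → QW X → Prop) (S : QW Y → QW Y → Prop)

def genC : X ⊕ Y → Monoid.Coprod (EnvelGroup (PresentedQuandle R)) (EnvelGroup (PresentedQuandle S)) :=
  Sum.elim (fun x => Monoid.Coprod.inl (toEnvelGroup _ (mk R (QW.of x))))
    (fun y => Monoid.Coprod.inr (toEnvelGroup _ (mk S (QW.of y))))

theorem ev_genC_inl (w : QW X) :
    QW.ev (genC R S) (QW.map Sum.inl w)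
      = Monoid.Coprod.inl (toEnvelGroup (PresentedQuandle R) (mk R w)) := by
  rw [QW.ev_map, toE_mk]
  exact (QW.ev_hom (Monoid.Coprod.inl : EnvelGroup (PresentedQuandle R) →*
      Monoid.Coprod (EnvelGroup (PresentedQuandle R)) (EnvelGroup (PresentedQuandle S)))
    (fun x => toEnvelGroup (PresentedQuandle R) (mk R (QW.of x))) w).symm

theorem ev_genC_inr (w : QW Y) :
    QW.ev (genC R S) (QW.map Sum.inr w)
      = Monoid.Coprod.inr (toEnvelGroup (PresentedQuandle S) (mk S w)) := by
  rw [QW.ev_map, toE_mk]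
  exact (QW.ev_hom (Monoid.Coprod.inr : EnvelGroup (PresentedQuandle S) →*
      Monoid.Coprod (EnvelGroup (PresentedQuandle R)) (EnvelGroup (PresentedQuandle S)))
    (fun y => toEnvelGroup (PresentedQuandle S) (mk S (QW.of y))) w).symm

theorem hRS : ∀ a b, sumRel R S a b → QW.ev (genC R S) a = QW.ev (genC R S) b := by
  rintro a b (⟨a', b', h, rfl, rfl⟩ | ⟨a', b', h, rfl, rfl⟩)
  · rw [ev_genC_inl, ev_genC_inl, sound (QW.Rel.rel h)]
  · rw [ev_genC_inr, ev_genC_inr, sound (QW.Rel.rel h)]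

def ψh : EnvelGroup (PresentedQuandle (sumRel R S)) →*
    Monoid.Coprod (EnvelGroup (PresentedQuandle R)) (EnvelGroup (PresentedQuandle S)) :=
  Rack.toEnvelGroup.map (evSh (genC R S) (hRS R S))

theorem ψh_toE (w : QW (X ⊕ Y)) :
    ψh R S (toEnvelGroup _ (mk (sumRel R S) w)) = QW.ev (genC R S) w :=
  (EnvelAux.univ_apply _ _).trans (evSh_mk _ _ w)

theorem rel_inl {a b : QW X} (h : QW.Rel R a b) :
    QW.Rel (sumRel R S) (QW.map Sum.inl a) (QW.map Sum.inl b) := by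
  induction h with
  | rel h => exact QW.Rel.rel (Or.inl ⟨_, _, h, rfl, rfl⟩)
  | refl a => exact QW.Rel.refl _
  | symm _ ih => exact ih.symm
  | trans _ _ ih1 ih2 => exact ih1.trans ih2
  | congr_op _ _ ih1 ih2 => exact QW.Rel.congr_op ih1 ih2
  | congr_opInv _ _ ih1 ih2 => exact QW.Rel.congr_opInv ih1 ih2
  | idem a => exact QW.Rel.idem _
  | idemInv a => exact QW.Rel.idemInv _
  | cancel a b => exact QW.Rel.cancel _ _
  | cancel' a b => exact QW.Rel.cancel' _ _
  | distrib a b c => exact QW.Rel.distrib _ _ _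

theorem rel_inr {a b : QW Y} (h : QW.Rel S a b) :
    QW.Rel (sumRel R S) (QW.map Sum.inr a) (QW.map Sum.inr b) := by
  induction h with
  | rel h => exact QW.Rel.rel (Or.inr ⟨_, _, h, rfl, rfl⟩)
  | refl a => exact QW.Rel.refl _
  | symm _ ih => exact ih.symm
  | trans _ _ ih1 ih2 => exact ih1.trans ih2
  | congr_op _ _ ih1 ih2 => exact QW.Rel.congr_op ih1 ih2
  | congr_opInv _ _ ih1 ih2 => exact QW.Rel.congr_opInv ih1 ih2
  | idem a => exact QW.Rel.idem _
  | idemInv a => exact QW.Rel.idemInv _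
  | cancel a b => exact QW.Rel.cancel _ _
  | cancel' a b => exact QW.Rel.cancel' _ _
  | distrib a b c => exact QW.Rel.distrib _ _ _

def inlQ : PresentedQuandle R → PresentedQuandle (sumRel R S) :=
  Quotient.map (QW.map Sum.inl) (fun _ _ h => rel_inl R S h)

def inrQ : PresentedQuandle S → PresentedQuandle (sumRel R S) :=
  Quotient.map (QW.map Sum.inr) (fun _ _ h => rel_inr R S h)

theorem inlQ_mk (w : QW X) : inlQ R S (mk R w) = mk (sumRel R S) (QW.map Sum.inl w) := rfl

theorem inrQ_mk (w : QW Y) : inrQ R S (mk S w) = mk (sumRel R S) (QW.map Sum.inr w) := rfl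

def inlSh : PresentedQuandle R →◃ PresentedQuandle (sumRel R S) where
  toFun := inlQ R S
  map_act' := by
    rintro ⟨x⟩ ⟨y⟩
    rfl

def inrSh : PresentedQuandle S →◃ PresentedQuandle (sumRel R S) where
  toFun := inrQ R S
  map_act' := by
    rintro ⟨x⟩ ⟨y⟩
    rfl

def F1 : EnvelGroup (PresentedQuandle R) →* EnvelGroup (PresentedQuandle (sumRel R S)) :=
  Rack.toEnvelGroup.map ((Rack.toEnvelGroup _).comp (inlSh R S))

def F2 : EnvelGroup (PresentedQuandle S) →* EnvelGroup (PresentedQuandle (sumRel R S)) :=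
  Rack.toEnvelGroup.map ((Rack.toEnvelGroup _).comp (inrSh R S))

theorem F1_toE (q : PresentedQuandle R) :
    F1 R S (toEnvelGroup _ q) = toEnvelGroup _ (inlQ R S q) :=
  EnvelAux.univ_apply _ _

theorem F2_toE (p : PresentedQuandle S) :
    F2 R S (toEnvelGroup _ p) = toEnvelGroup _ (inrQ R S p) :=
  EnvelAux.univ_apply _ _

def φh : Monoid.Coprod (EnvelGroup (PresentedQuandle R)) (EnvelGroup (PresentedQuandle S)) →*
    EnvelGroup (PresentedQuandle (sumRel R S)) :=
  Monoid.Coprod.lift (F1 R S) (F2 R S)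

theorem φh_inl (a : EnvelGroup (PresentedQuandle R)) :
    φh R S (Monoid.Coprod.inl a) = F1 R S a :=
  Monoid.Coprod.lift_apply_inl _ _ a

theorem φh_inr (b : EnvelGroup (PresentedQuandle S)) :
    φh R S (Monoid.Coprod.inr b) = F2 R S b :=
  Monoid.Coprod.lift_apply_inr _ _ b

theorem φh_ev (w : QW (X ⊕ Y)) :
    φh R S (QW.ev (genC R S) w) = toEnvelGroup _ (mk (sumRel R S) w) := by
  induction w with
  | of x =>
    cases x with
    | inl x =>
      show φh R S (Monoid.Coprod.inl (toEnvelGroup _ (mk R (QW.of x)))) = _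
      rw [φh_inl, F1_toE]
      rfl
    | inr y =>
      show φh R S (Monoid.Coprod.inr (toEnvelGroup _ (mk S (QW.of y)))) = _
      rw [φh_inr, F2_toE]
      rfl
  | op a b iha ihb =>
    show φh R S ((QW.ev (genC R S) b)⁻¹ * QW.ev (genC R S) a * QW.ev (genC R S) b) = _
    rw [map_mul, map_mul, map_inv, iha, ihb]
    have h1 : mk (sumRel R S) (QW.op a b) = mk (sumRel R S) b ◃⁻¹ mk (sumRel R S) a := rfl
    rw [h1, EnvelAux.toE_invAct]
  | opInv a b iha ihb =>
    show φh R S (QW.ev (genC R S) b * QW.ev (genC R S) a * (QW.ev (genC R S) b)⁻¹) = _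
    rw [map_mul, map_mul, map_inv, iha, ihb]
    have h1 : mk (sumRel R S) (QW.opInv a b) = mk (sumRel R S) b ◃ mk (sumRel R S) a := rfl
    have h2 := (toEnvelGroup (PresentedQuandle (sumRel R S))).map_act
      (x := mk (sumRel R S) b) (y := mk (sumRel R S) a)
    rw [Quandle.conj_act_eq_conj] at h2
    rw [h1, h2]

theorem φψ : (φh R S).comp (ψh R S) = MonoidHom.id _ := by
  apply EnvelAux.hom_ext
  intro z
  obtain ⟨w⟩ := z
  show φh R S (ψh R S (toEnvelGroup _ (mk (sumRel R S) w)))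
    = toEnvelGroup _ (mk (sumRel R S) w)
  rw [ψh_toE, φh_ev]

theorem ψφ : (ψh R S).comp (φh R S) = MonoidHom.id _ := by
  apply Monoid.Coprod.hom_ext
  · apply EnvelAux.hom_ext
    intro q
    obtain ⟨w⟩ := q
    show ψh R S (φh R S (Monoid.Coprod.inl (toEnvelGroup _ (mk R w))))
      = Monoid.Coprod.inl (toEnvelGroup _ (mk R w))
    rw [φh_inl, F1_toE, inlQ_mk, ψh_toE, ev_genC_inl]
  · apply EnvelAux.hom_ext
    intro p
    obtain ⟨w⟩ := p
    show ψh R S (φh R S (Monoid.Coprod.inr (toEnvelGroup _ (mk S w))))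
      = Monoid.Coprod.inr (toEnvelGroup _ (mk S w))
    rw [φh_inr, F2_toE, inrQ_mk, ψh_toE, ev_genC_inr]

def theIso : EnvelGroup (PresentedQuandle (sumRel R S)) ≃*
    Monoid.Coprod (EnvelGroup (PresentedQuandle R)) (EnvelGroup (PresentedQuandle S)) :=
  MonoidHom.toMulEquiv (ψh R S) (φh R S) (φψ R S) (ψφ R S)

end FreeProdMain

namespace FreeProdMain

open PresentedQuandle Rack EnvelAux

variable {X Y : Type u} (R : QW X → QW X → Prop) (S : QW Y → QW Y → Prop)

theorem inlQ_equiv (h : EnvelGroup (PresentedQuandle R)) (q : PresentedQuandle R) :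
    inlQ R S (envelAction h q) = envelAction (F1 R S h) (inlQ R S q) := by
  set T : Subgroup (EnvelGroup (PresentedQuandle R)) :=
    { carrier := {h | ∀ q, inlQ R S (envelAction h q) = envelAction (F1 R S h) (inlQ R S q)}
      one_mem' := by
        intro q
        rw [actA_one, map_one, actA_one]
      mul_mem' := by
        intro a b ha hb q
        rw [actA_mul, ha, hb, map_mul, actA_mul]
      inv_mem' := by
        intro a ha q
        have h1 := ha (envelAction a⁻¹ q)
        rw [actA_inv_cancel] at h1
        have h2 : envelAction (F1 R S a) (envelAction (F1 R S a⁻¹) (inlQ R S q))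
            = inlQ R S q := by
          rw [← actA_mul, ← map_mul, mul_inv_cancel, map_one, actA_one]
        exact (envelAction (F1 R S a)).injective (h1.symm.trans h2.symm) } with hT
  have hle : Subgroup.closure
      (Set.range fun x : PresentedQuandle R => toEnvelGroup _ x) ≤ T := by
    rw [Subgroup.closure_le]
    rintro _ ⟨x, rfl⟩
    intro q
    rw [envelAction_prop, F1_toE, envelAction_prop]
    exact (inlSh R S).map_act
  rw [closure_range] at hle
  exact hle (Subgroup.mem_top h) q

theorem inrQ_equiv (h : EnvelGroup (PresentedQuandle S)) (p : PresentedQuandle S) :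
    inrQ R S (envelAction h p) = envelAction (F2 R S h) (inrQ R S p) := by
  set T : Subgroup (EnvelGroup (PresentedQuandle S)) :=
    { carrier := {h | ∀ p, inrQ R S (envelAction h p) = envelAction (F2 R S h) (inrQ R S p)}
      one_mem' := by
        intro p
        rw [actA_one, map_one, actA_one]
      mul_mem' := by
        intro a b ha hb p
        rw [actA_mul, ha, hb, map_mul, actA_mul]
      inv_mem' := by
        intro a ha p
        have h1 := ha (envelAction a⁻¹ p)
        rw [actA_inv_cancel] at h1
        have h2 : envelAction (F2 R S a) (envelAction (F2 R S a⁻¹) (inrQ R S p))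
            = inrQ R S p := by
          rw [← actA_mul, ← map_mul, mul_inv_cancel, map_one, actA_one]
        exact (envelAction (F2 R S a)).injective (h1.symm.trans h2.symm) } with hT
  have hle : Subgroup.closure
      (Set.range fun x : PresentedQuandle S => toEnvelGroup _ x) ≤ T := by
    rw [Subgroup.closure_le]
    rintro _ ⟨x, rfl⟩
    intro p
    rw [envelAction_prop, F2_toE, envelAction_prop]
    exact (inrSh R S).map_act
  rw [closure_range] at hle
  exact hle (Subgroup.mem_top h) p

theorem nf (w : QW (X ⊕ Y)) :
    (∃ (q : PresentedQuandle R)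
       (g : Monoid.Coprod (EnvelGroup (PresentedQuandle R)) (EnvelGroup (PresentedQuandle S))),
      mk (sumRel R S) w = envelAction (φh R S g) (inlQ R S q) ∧
      QW.ev (genC R S) w = g * Monoid.Coprod.inl (toEnvelGroup _ q) * g⁻¹) ∨
    (∃ (p : PresentedQuandle S)
       (g : Monoid.Coprod (EnvelGroup (PresentedQuandle R)) (EnvelGroup (PresentedQuandle S))),
      mk (sumRel R S) w = envelAction (φh R S g) (inrQ R S p) ∧
      QW.ev (genC R S) w = g * Monoid.Coprod.inr (toEnvelGroup _ p) * g⁻¹) := by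
  induction w with
  | of x =>
    cases x with
    | inl x =>
      left
      refine ⟨mk R (QW.of x), 1, ?_, ?_⟩
      · rw [map_one, actA_one]
        rfl
      · show Monoid.Coprod.inl (toEnvelGroup _ (mk R (QW.of x))) = _
        rw [one_mul, inv_one, mul_one]
    | inr y =>
      right
      refine ⟨mk S (QW.of y), 1, ?_, ?_⟩
      · rw [map_one, actA_one]
        rfl
      · show Monoid.Coprod.inr (toEnvelGroup _ (mk S (QW.of y))) = _
        rw [one_mul, inv_one, mul_one]
  | op a b iha ihb =>
    have key : ∀ z : PresentedQuandle (sumRel R S),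
        mk (sumRel R S) b ◃⁻¹ z
          = envelAction (φh R S ((QW.ev (genC R S) b)⁻¹)) z := by
      intro z
      rw [map_inv, φh_ev]
      exact (actA_inv_toE _ _).symm
    rcases iha with ⟨q, g, h1, h2⟩ | ⟨p, g, h1, h2⟩
    · left
      refine ⟨q, (QW.ev (genC R S) b)⁻¹ * g, ?_, ?_⟩
      · have e1 : mk (sumRel R S) (QW.op a b)
            = mk (sumRel R S) b ◃⁻¹ mk (sumRel R S) a := rfl
        rw [e1, key, h1, ← actA_mul, ← map_mul]
      · show (QW.ev (genC R S) b)⁻¹ * QW.ev (genC R S) a * QW.ev (genC R S) b = _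
        rw [h2]
        group
    · right
      refine ⟨p, (QW.ev (genC R S) b)⁻¹ * g, ?_, ?_⟩
      · have e1 : mk (sumRel R S) (QW.op a b)
            = mk (sumRel R S) b ◃⁻¹ mk (sumRel R S) a := rfl
        rw [e1, key, h1, ← actA_mul, ← map_mul]
      · show (QW.ev (genC R S) b)⁻¹ * QW.ev (genC R S) a * QW.ev (genC R S) b = _
        rw [h2]
        group
  | opInv a b iha ihb =>
    have key : ∀ z : PresentedQuandle (sumRel R S),
        mk (sumRel R S) b ◃ z
          = envelAction (φh R S (QW.ev (genC R S) b)) z := by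
      intro z
      rw [φh_ev]
      exact (envelAction_prop _ _).symm
    rcases iha with ⟨q, g, h1, h2⟩ | ⟨p, g, h1, h2⟩
    · left
      refine ⟨q, QW.ev (genC R S) b * g, ?_, ?_⟩
      · have e1 : mk (sumRel R S) (QW.opInv a b)
            = mk (sumRel R S) b ◃ mk (sumRel R S) a := rfl
        rw [e1, key, h1, ← actA_mul, ← map_mul]
      · show QW.ev (genC R S) b * QW.ev (genC R S) a * (QW.ev (genC R S) b)⁻¹ = _
        rw [h2]
        group
    · right
      refine ⟨p, QW.ev (genC R S) b * g, ?_, ?_⟩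
      · have e1 : mk (sumRel R S) (QW.opInv a b)
            = mk (sumRel R S) b ◃ mk (sumRel R S) a := rfl
        rw [e1, key, h1, ← actA_mul, ← map_mul]
      · show QW.ev (genC R S) b * QW.ev (genC R S) a * (QW.ev (genC R S) b)⁻¹ = _
        rw [h2]
        group

theorem inj_aux
    (hQ : Function.Injective (fun q : PresentedQuandle R => toEnvelGroup _ q))
    (hP : Function.Injective (fun p : PresentedQuandle S => toEnvelGroup _ p))
    (w w' : QW (X ⊕ Y))
    (h : toEnvelGroup (PresentedQuandle (sumRel R S)) (mk (sumRel R S) w)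
       = toEnvelGroup (PresentedQuandle (sumRel R S)) (mk (sumRel R S) w')) :
    mk (sumRel R S) w = mk (sumRel R S) w' := by
  have hev : QW.ev (genC R S) w = QW.ev (genC R S) w' := by
    rw [← ψh_toE R S w, ← ψh_toE R S w']
    exact congrArg (ψh R S) h
  rcases nf R S w with ⟨q, g, h1, h2⟩ | ⟨p, g, h1, h2⟩ <;>
    rcases nf R S w' with ⟨q', g', h1', h2'⟩ | ⟨p', g', h1', h2'⟩
  · -- both from R
    rw [h2, h2'] at hev
    have hconj : (g'⁻¹ * g) * Monoid.Coprod.inl (toEnvelGroup _ q) * (g'⁻¹ * g)⁻¹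
        = Monoid.Coprod.inl (toEnvelGroup _ q') := by
      calc (g'⁻¹ * g) * Monoid.Coprod.inl (toEnvelGroup _ q) * (g'⁻¹ * g)⁻¹
          = g'⁻¹ * (g * Monoid.Coprod.inl (toEnvelGroup _ q) * g⁻¹) * g' := by group
        _ = g'⁻¹ * (g' * Monoid.Coprod.inl (toEnvelGroup _ q') * g'⁻¹) * g' := by rw [hev]
        _ = Monoid.Coprod.inl (toEnvelGroup _ q') := by group
    obtain ⟨c, hc⟩ := FreeProdConj.coprod_conj_inl (toE_ne_one q) _ hconj
    have h5 : (Monoid.Coprod.inl : _ →* Monoid.Coprod (EnvelGroup (PresentedQuandle R))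
          (EnvelGroup (PresentedQuandle S))) (c * toEnvelGroup _ q * c⁻¹)
        = Monoid.Coprod.inl (toEnvelGroup _ q') := by
      rw [← hconj, hc]
      simp
    have h6 := Monoid.Coprod.inl_injective h5
    have h7 : toEnvelGroup _ (envelAction c q) = toEnvelGroup _ q' := by
      rw [toE_act]
      exact h6
    have h8 : envelAction c q = q' := hQ h7
    rw [h1, h1', ← h8, inlQ_equiv, ← actA_mul]
    have h9 : φh R S g' * F1 R S c = φh R S g := by
      rw [← φh_inl, ← map_mul]
      congr 1
      rw [← hc]
      group
    rw [h9]
  · -- cross case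
    exfalso
    rw [h2, h2'] at hev
    apply FreeProdConj.coprod_conj_inl_ne_inr (toE_ne_one q) (toE_ne_one p') (g'⁻¹ * g)
    calc (g'⁻¹ * g) * Monoid.Coprod.inl (toEnvelGroup _ q) * (g'⁻¹ * g)⁻¹
        = g'⁻¹ * (g * Monoid.Coprod.inl (toEnvelGroup _ q) * g⁻¹) * g' := by group
      _ = g'⁻¹ * (g' * Monoid.Coprod.inr (toEnvelGroup _ p') * g'⁻¹) * g' := by rw [hev]
      _ = Monoid.Coprod.inr (toEnvelGroup _ p') := by group
  · -- cross case
    exfalso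
    rw [h2, h2'] at hev
    apply FreeProdConj.coprod_conj_inl_ne_inr (toE_ne_one q') (toE_ne_one p) (g⁻¹ * g')
    calc (g⁻¹ * g') * Monoid.Coprod.inl (toEnvelGroup _ q') * (g⁻¹ * g')⁻¹
        = g⁻¹ * (g' * Monoid.Coprod.inl (toEnvelGroup _ q') * g'⁻¹) * g := by group
      _ = g⁻¹ * (g * Monoid.Coprod.inr (toEnvelGroup _ p) * g⁻¹) * g := by rw [← hev]
      _ = Monoid.Coprod.inr (toEnvelGroup _ p) := by group
  · -- both from S
    rw [h2, h2'] at hev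
    have hconj : (g'⁻¹ * g) * Monoid.Coprod.inr (toEnvelGroup _ p) * (g'⁻¹ * g)⁻¹
        = Monoid.Coprod.inr (toEnvelGroup _ p') := by
      calc (g'⁻¹ * g) * Monoid.Coprod.inr (toEnvelGroup _ p) * (g'⁻¹ * g)⁻¹
          = g'⁻¹ * (g * Monoid.Coprod.inr (toEnvelGroup _ p) * g⁻¹) * g' := by group
        _ = g'⁻¹ * (g' * Monoid.Coprod.inr (toEnvelGroup _ p') * g'⁻¹) * g' := by rw [hev]
        _ = Monoid.Coprod.inr (toEnvelGroup _ p') := by group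
    obtain ⟨c, hc⟩ := FreeProdConj.coprod_conj_inr (toE_ne_one p) _ hconj
    have h5 : (Monoid.Coprod.inr : _ →* Monoid.Coprod (EnvelGroup (PresentedQuandle R))
          (EnvelGroup (PresentedQuandle S))) (c * toEnvelGroup _ p * c⁻¹)
        = Monoid.Coprod.inr (toEnvelGroup _ p') := by
      rw [← hconj, hc]
      simp
    have h6 := Monoid.Coprod.inr_injective h5
    have h7 : toEnvelGroup _ (envelAction c p) = toEnvelGroup _ p' := by
      rw [toE_act]
      exact h6
    have h8 : envelAction c p = p' := hP h7
    rw [h1, h1', ← h8, inrQ_equiv, ← actA_mul]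
    have h9 : φh R S g' * F2 R S c = φh R S g := by
      rw [← φh_inr, ← map_mul]
      congr 1
      rw [← hc]
      group
    rw [h9]

end FreeProdMain

/-- If `Q = ⟨X | R⟩` and `P = ⟨Y | S⟩` are presented quandles, then the enveloping group of
their free product `Q * P = ⟨X ∪ Y | R ∪ S⟩` is the free product (coproduct) of groups
`G_Q * G_P`; moreover, if the natural maps `Q → G_Q` and `P → G_P` are injective, then so is
the natural map `Q * P → G_{Q*P}`. -/
theorem envelGroup_free_product (X Y : Type u)
    (R : QW X → QW X → Prop) (S : QW Y → QW Y → Prop) :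
    Nonempty (Rack.EnvelGroup (PresentedQuandle (sumRel R S)) ≃*
      Monoid.Coprod (Rack.EnvelGroup (PresentedQuandle R))
        (Rack.EnvelGroup (PresentedQuandle S))) ∧
    (Function.Injective (fun q : PresentedQuandle R =>
        (Rack.toEnvelGroup _ q : Rack.EnvelGroup (PresentedQuandle R))) →
     Function.Injective (fun p : PresentedQuandle S =>
        (Rack.toEnvelGroup _ p : Rack.EnvelGroup (PresentedQuandle S))) →
     Function.Injective (fun z : PresentedQuandle (sumRel R S) =>
        (Rack.toEnvelGroup _ z : Rack.EnvelGroup (PresentedQuandle (sumRel R S))))) := by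
  constructor
  · exact ⟨FreeProdMain.theIso R S⟩
  · intro hQ hP
    intro z z'
    refine Quotient.ind₂ (motive := fun (z z' : PresentedQuandle (sumRel R S)) =>
      Rack.toEnvelGroup _ z = Rack.toEnvelGroup _ z' → z = z') ?_ z z'
    intro w w' h
    exact FreeProdMain.inj_aux R S hQ hP w w' h
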